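/- Let X₁,…,Xₙ be independent mean-zero real random variables satisfying Cramér's condition: there exists c > 0 such that E|Xᵢ|^k ≤ c^{k−2}·k!·E[Xᵢ²] < ∞ for all i and all k ≥ 3. Then for Sₙ = Σᵢ Xᵢ and any t > 0, P(|Sₙ| ≥ t) ≤ 2·exp(−t² / (4·Σᵢ E[Xᵢ²] + 2ct)). -/

import Mathlib

open MeasureTheory ProbabilityTheory Real

lemma bern_pointwise (u : ℝ) : Real.exp u ≤ 1 + u + (Real.exp |u| - 1 - |u|) := by
  rcases le_or_gt 0 u with h | h
  · rw [abs_of_nonneg h]; linarith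
  · rw [abs_of_neg h]
    have hs := Real.sinh_le_self_iff.mpr h.le
    rw [Real.sinh_eq] at hs
    linarith

lemma bern_T_eq (l y : ℝ) :
    Real.exp (l * |y|) - 1 - l * |y| =
      ∑' k : ℕ, l ^ (k + 2) * |y| ^ (k + 2) / ((k + 2).factorial : ℝ) := by
  have hsum : Summable (fun n : ℕ => (l * |y|) ^ n / (n.factorial : ℝ)) :=
    Real.summable_pow_div_factorial _
  have hexp : Real.exp (l * |y|) = ∑' n : ℕ, (l * |y|) ^ n / (n.factorial : ℝ) := by
    rw [Real.exp_eq_exp_ℝ, NormedSpace.exp_eq_tsum_div]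
  rw [hexp, ← hsum.sum_add_tsum_nat_add 2]
  simp only [mul_pow]
  simp [Finset.sum_range_succ, Nat.factorial]
  ring

lemma bern_g_summable (l y : ℝ) :
    Summable (fun k : ℕ => l ^ (k + 2) * |y| ^ (k + 2) / ((k + 2).factorial : ℝ)) := by
  have hsum : Summable (fun n : ℕ => (l * |y|) ^ n / (n.factorial : ℝ)) :=
    Real.summable_pow_div_factorial _
  have := (summable_nat_add_iff 2).mpr hsum
  exact this.congr fun k => by rw [mul_pow]

lemma bern_mgf {Ω : Type*} [MeasurableSpace Ω] (μ : Measure Ω) [IsProbabilityMeasure μ]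
    (Y : Ω → ℝ) (hm : Measurable Y)
    (hint : ∀ k : ℕ, Integrable (fun ω => |Y ω| ^ k) μ)
    (hmean : μ[Y] = 0) (c l : ℝ) (hc : 0 < c) (hl : 0 < l) (hlc : l * c < 1)
    (hcr : ∀ k : ℕ, 3 ≤ k → μ[fun ω => |Y ω| ^ k] ≤
      c ^ (k - 2) * (k.factorial : ℝ) * μ[fun ω => (Y ω) ^ 2]) :
    Integrable (fun ω => Real.exp (l * Y ω)) μ ∧
    μ[fun ω => Real.exp (l * Y ω)] ≤
      Real.exp (l ^ 2 * μ[fun ω => (Y ω) ^ 2] / 2 * ((1 + l * c) / (1 - l * c))) := by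
  set σ : ℝ := μ[fun ω => (Y ω) ^ 2] with hσdef
  have hσabs : μ[fun ω => |Y ω| ^ 2] = σ := by
    apply integral_congr_ae; filter_upwards with ω; rw [sq_abs]
  have hσ0 : 0 ≤ σ := integral_nonneg fun ω => sq_nonneg _
  have hlc0 : 0 ≤ l * c := le_of_lt (mul_pos hl hc)
  -- the summands
  set g : ℕ → Ω → ℝ := fun k ω => l ^ (k + 2) * |Y ω| ^ (k + 2) / ((k + 2).factorial : ℝ)
    with hgdef
  have hg_int : ∀ k, Integrable (g k) μ := by
    intro k
    have := (hint (k + 2)).const_mul (l ^ (k + 2) / ((k + 2).factorial : ℝ))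
    exact this.congr <| .of_forall fun ω => by simp [hgdef]; ring
  have hg_nonneg : ∀ k ω, 0 ≤ g k ω := fun k ω => by
    apply div_nonneg (mul_nonneg (pow_nonneg hl.le _) (pow_nonneg (abs_nonneg _) _))
    positivity
  -- the majorizing sequence
  set b : ℕ → ℝ := fun k => if k = 0 then l ^ 2 * σ / 2 else l ^ 2 * σ * (l * c) ^ k
    with hbdef
  have hb_nonneg : ∀ k, 0 ≤ b k := by
    intro k
    simp only [hbdef]
    split <;> positivity
  have hb_summable : Summable b := by
    rw [← summable_nat_add_iff 1]
    have : Summable (fun k : ℕ => (l ^ 2 * σ * (l * c)) * (l * c) ^ k) :=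
      (summable_geometric_of_lt_one hlc0 hlc).mul_left _
    exact this.congr fun k => by simp [hbdef]; ring
  have hb_tsum : ∑' k, b k = l ^ 2 * σ / 2 * ((1 + l * c) / (1 - l * c)) := by
    rw [hb_summable.tsum_eq_zero_add]
    have h1 : (fun k : ℕ => b (k + 1)) = fun k => (l ^ 2 * σ * (l * c)) * (l * c) ^ k := by
      funext k; simp [hbdef]; ring
    rw [h1, tsum_mul_left, tsum_geometric_of_lt_one hlc0 hlc]
    have hne : 1 - l * c ≠ 0 := by linarith
    simp only [hbdef, if_pos rfl]
    field_simp
    ring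
  -- bound on each integral
  have hI : ∀ k, μ[g k] = l ^ (k + 2) / ((k + 2).factorial : ℝ) * μ[fun ω => |Y ω| ^ (k + 2)] := by
    intro k
    rw [← integral_const_mul]
    apply integral_congr_ae; filter_upwards with ω; simp [hgdef]; ring
  have hgb : ∀ k, μ[g k] ≤ b k := by
    intro k
    cases k with
    | zero =>
      simp only [hbdef, if_pos rfl]
      rw [hI 0, hσabs]
      norm_num [Nat.factorial]
      linarith
    | succ k =>
      have hI := hI (k + 1)
      have h3 : 3 ≤ k + 3 := by omega
      have hcr3 := hcr (k + 3) h3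
      rw [hI]
      have hfac : (0:ℝ) < ((k + 3).factorial : ℝ) := by positivity
      calc l ^ (k + 1 + 2) / ((k + 1 + 2).factorial : ℝ) * μ[fun ω => |Y ω| ^ (k + 1 + 2)]
          ≤ l ^ (k + 3) / ((k + 3).factorial : ℝ) *
            (c ^ (k + 3 - 2) * ((k + 3).factorial : ℝ) * σ) := by
            apply mul_le_mul_of_nonneg_left _ (by positivity)
            convert hcr3 using 3 <;> omega
        _ = l ^ (k + 3) * c ^ (k + 1) * σ := by
            have : k + 3 - 2 = k + 1 := by omega
            rw [this]; field_simp
        _ = b (k + 1) := by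
            simp only [hbdef, if_neg (Nat.succ_ne_zero k)]
            rw [mul_pow]
            ring
  have hg_int_nonneg : ∀ k, 0 ≤ μ[g k] := fun k => integral_nonneg (hg_nonneg k)
  -- lintegral bound
  have hnn : ∀ k (ω : Ω), (‖g k ω‖₊ : ENNReal) = ENNReal.ofReal (g k ω) := fun k ω =>
    Real.enorm_eq_ofReal (hg_nonneg k ω)
  have hlin_each : ∀ k, ∫⁻ ω, (‖g k ω‖₊ : ENNReal) ∂μ = ENNReal.ofReal (μ[g k]) := by
    intro k
    rw [ofReal_integral_eq_lintegral_ofReal (hg_int k) (.of_forall (hg_nonneg k))]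
    exact lintegral_congr fun ω => hnn k ω
  have hlin : ∑' k, ∫⁻ ω, (‖g k ω‖₊ : ENNReal) ∂μ ≤ ENNReal.ofReal (∑' k, b k) := by
    rw [ENNReal.ofReal_tsum_of_nonneg hb_nonneg hb_summable]
    apply ENNReal.tsum_le_tsum
    intro k
    rw [hlin_each k]
    exact ENNReal.ofReal_le_ofReal (hgb k)
  have hlin_ne : ∑' k, ∫⁻ ω, (‖g k ω‖₊ : ENNReal) ∂μ ≠ ⊤ :=
    (lt_of_le_of_lt hlin ENNReal.ofReal_lt_top).ne
  -- the tail function T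
  set T : Ω → ℝ := fun ω => Real.exp (l * |Y ω|) - 1 - l * |Y ω| with hTdef
  have hT_eq : ∀ ω, T ω = ∑' k, g k ω := fun ω => bern_T_eq l (Y ω)
  have hT_meas : Measurable T := by
    apply Measurable.sub
    apply Measurable.sub
    · exact (measurable_const.mul hm.abs).exp
    · exact measurable_const
    · exact measurable_const.mul hm.abs
  have hT_nonneg : ∀ ω, 0 ≤ T ω := by
    intro ω
    have := Real.add_one_le_exp (l * |Y ω|)
    simp only [hTdef]
    linarith
  have hg_meas : ∀ k, Measurable (g k) := fun k =>
    (measurable_const.mul (hm.abs.pow_const (k + 2))).div_const _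
  have hT_lin : ∫⁻ ω, (‖T ω‖₊ : ENNReal) ∂μ = ∑' k, ∫⁻ ω, (‖g k ω‖₊ : ENNReal) ∂μ := by
    calc ∫⁻ ω, (‖T ω‖₊ : ENNReal) ∂μ
        = ∫⁻ ω, ∑' k, ENNReal.ofReal (g k ω) ∂μ := by
          apply lintegral_congr
          intro ω
          rw [show (‖T ω‖₊ : ENNReal) = ENNReal.ofReal (T ω) from Real.enorm_eq_ofReal (hT_nonneg ω), hT_eq ω,
            ENNReal.ofReal_tsum_of_nonneg (fun k => hg_nonneg k ω) (bern_g_summable l (Y ω))]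
      _ = ∑' k, ∫⁻ ω, ENNReal.ofReal (g k ω) ∂μ :=
          lintegral_tsum fun k => ((hg_meas k).ennreal_ofReal).aemeasurable
      _ = ∑' k, ∫⁻ ω, (‖g k ω‖₊ : ENNReal) ∂μ := by
          congr 1; funext k; exact (lintegral_congr fun ω => hnn k ω).symm
  have hT_int : Integrable T μ := by
    refine ⟨hT_meas.aestronglyMeasurable, ?_⟩
    rw [HasFiniteIntegral]
    change ∫⁻ ω, (‖T ω‖₊ : ENNReal) ∂μ < ⊤
    rw [hT_lin]
    exact lt_of_le_of_ne (le_top) hlin_ne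
  have hT_integral : μ[T] ≤ ∑' k, b k := by
    have h1 : μ[T] = ∑' k, μ[g k] := by
      calc μ[T] = ∫ ω, ∑' k, g k ω ∂μ := integral_congr_ae (.of_forall hT_eq)
        _ = ∑' k, μ[g k] :=
            integral_tsum (fun k => (hg_meas k).aestronglyMeasurable) hlin_ne
    rw [h1]
    exact Summable.tsum_le_tsum hgb (Summable.of_nonneg_of_le hg_int_nonneg hgb hb_summable) hb_summable
  -- integrability of exp (l * Y)
  have hYint : Integrable Y μ := by
    have h1 := hint 1
    simp only [pow_one] at h1
    exact h1.mono' hm.aestronglyMeasurable (.of_forall fun ω => by simp [Real.norm_eq_abs])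
  set h : Ω → ℝ := fun ω => 1 + l * Y ω + T ω with hhdef
  have hh_int : Integrable h μ := ((integrable_const 1).add (hYint.const_mul l)).add hT_int
  have hexp_le : ∀ ω, Real.exp (l * Y ω) ≤ h ω := by
    intro ω
    have hb := bern_pointwise (l * Y ω)
    rw [abs_mul, abs_of_pos hl] at hb
    simpa [hhdef, hTdef] using hb
  have hexp_int : Integrable (fun ω => Real.exp (l * Y ω)) μ := by
    apply hh_int.mono' ((measurable_const.mul hm).exp).aestronglyMeasurable
    filter_upwards with ω
    rw [Real.norm_of_nonneg (Real.exp_pos _).le]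
    exact hexp_le ω
  refine ⟨hexp_int, ?_⟩
  have hA : Integrable (fun ω => 1 + l * Y ω) μ := (integrable_const 1).add (hYint.const_mul l) |>.congr (.of_forall fun ω => rfl)
  have hh_val : μ[h] = 1 + l * μ[Y] + μ[T] := by
    calc μ[h] = ∫ ω, ((1 + l * Y ω) + T ω) ∂μ :=
          integral_congr_ae (.of_forall fun ω => by simp [hhdef])
      _ = (∫ ω, (1 + l * Y ω) ∂μ) + μ[T] := integral_add hA hT_int
      _ = ((∫ _ω, (1:ℝ) ∂μ) + ∫ ω, l * Y ω ∂μ) + μ[T] := by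
          rw [integral_add (integrable_const 1) (hYint.const_mul l)]
      _ = 1 + l * μ[Y] + μ[T] := by rw [integral_const, integral_const_mul]; simp
  calc (∫ ω, Real.exp (l * Y ω) ∂μ) ≤ ∫ ω, h ω ∂μ := by
        exact MeasureTheory.integral_mono hexp_int hh_int hexp_le
    _ = 1 + μ[T] := by rw [hh_val, hmean]; ring
    _ ≤ 1 + l ^ 2 * σ / 2 * ((1 + l * c) / (1 - l * c)) := by
        rw [← hb_tsum]; linarith [hT_integral]
    _ ≤ Real.exp (l ^ 2 * σ / 2 * ((1 + l * c) / (1 - l * c))) := by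
        linarith [Real.add_one_le_exp (l ^ 2 * σ / 2 * ((1 + l * c) / (1 - l * c)))]

set_option maxHeartbeats 2000000 in
/-- Bernstein's inequality. If `X₁,…,Xₙ` are independent mean-zero
real random variables satisfying Cramér's condition
`E|Xᵢ|^k ≤ c^{k−2} k! E[Xᵢ²] < ∞` for all `k ≥ 3`, then for `Sₙ = Σᵢ Xᵢ` and any
`t > 0`, `P(|Sₙ| ≥ t) ≤ 2 exp(−t² / (4 Σᵢ E[Xᵢ²] + 2 c t))`. -/
theorem bernstein_inequality
    {Ω : Type*} [MeasurableSpace Ω] (μ : Measure Ω) [IsProbabilityMeasure μ]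
    {n : ℕ} (X : Fin n → Ω → ℝ) (hmeas : ∀ i, Measurable (X i))
    (hindep : iIndepFun X μ)
    (hint : ∀ i (k : ℕ), Integrable (fun ω => |X i ω| ^ k) μ)
    (hmean : ∀ i, μ[X i] = 0)
    (c : ℝ) (hc : 0 < c)
    (hcramer : ∀ i, ∀ k : ℕ, 3 ≤ k →
      μ[fun ω => |X i ω| ^ k] ≤
        c ^ (k - 2) * (Nat.factorial k : ℝ) * μ[fun ω => (X i ω) ^ 2])
    (t : ℝ) (ht : 0 < t) :
    μ {ω | t ≤ |∑ i, X i ω|} ≤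
      ENNReal.ofReal (2 * Real.exp
        (-(t ^ 2) / (4 * (∑ i, μ[fun ω => (X i ω) ^ 2]) + 2 * c * t))) := by
  obtain ⟨σ, hσdef⟩ : ∃ σ : ℝ, σ = ∑ i, μ[fun ω => (X i ω) ^ 2] := ⟨_, rfl⟩
  rw [← hσdef]
  have hσi0 : ∀ i, 0 ≤ μ[fun ω => (X i ω) ^ 2] := fun i =>
    integral_nonneg fun ω => sq_nonneg _
  have hσ0 : 0 ≤ σ := hσdef ▸ Finset.sum_nonneg fun i _ => hσi0 i
  rcases eq_or_lt_of_le hσ0 with hσz | hσpos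
  · -- degenerate case: all variances vanish
    have hzero : ∀ i : Fin n, (fun ω => (X i ω) ^ 2) =ᵐ[μ] 0 := by
      intro i
      have hi : μ[fun ω => (X i ω) ^ 2] = 0 := by
        have := Finset.sum_eq_zero_iff_of_nonneg (fun i _ => hσi0 i) |>.mp (hσdef ▸ hσz.symm)
        exact this i (Finset.mem_univ i)
      have hint2 : Integrable (fun ω => (X i ω) ^ 2) μ := by
        refine (hint i 2).congr (.of_forall fun ω => by simp [sq_abs])
      exact (integral_eq_zero_iff_of_nonneg (fun ω => sq_nonneg _) hint2).mp hi
    have hae : ∀ᵐ ω ∂μ, ∑ i, X i ω = 0 := by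
      have : ∀ᵐ ω ∂μ, ∀ i : Fin n, (X i ω) ^ 2 = 0 := by
        rw [ae_all_iff]; exact fun i => hzero i
      filter_upwards [this] with ω hω
      exact Finset.sum_eq_zero fun i _ => pow_eq_zero_iff (n := 2) (by norm_num) |>.mp (hω i)
    have hnull : μ {ω | t ≤ |∑ i, X i ω|} = 0 := by
      refine measure_mono_null ?_ (ae_iff.mp hae)
      intro ω hω hz
      rw [Set.mem_setOf_eq, hz, abs_zero] at hω
      linarith
    rw [hnull]
    positivity
  · -- main case
    obtain ⟨D, hDdef⟩ : ∃ D : ℝ, D = 2 * σ + c * t := ⟨_, rfl⟩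
    have hD : 0 < D := by rw [hDdef]; positivity
    obtain ⟨l, hldef⟩ : ∃ l : ℝ, l = t / D := ⟨_, rfl⟩
    have hl : 0 < l := hldef ▸ div_pos ht hD
    have hlc : l * c < 1 := by
      rw [hldef, div_mul_eq_mul_div, div_lt_one hD, hDdef]
      nlinarith
    -- per-variable mgf bounds
    have hbern_p : ∀ i, Integrable (fun ω => Real.exp (l * X i ω)) μ ∧
        μ[fun ω => Real.exp (l * X i ω)] ≤
          Real.exp (l ^ 2 * μ[fun ω => (X i ω) ^ 2] / 2 * ((1 + l * c) / (1 - l * c))) :=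
      fun i => bern_mgf μ (X i) (hmeas i) (hint i) (hmean i) c l hc hl hlc (hcramer i)
    have hbern_m : ∀ i, Integrable (fun ω => Real.exp (-l * X i ω)) μ ∧
        μ[fun ω => Real.exp (-l * X i ω)] ≤
          Real.exp (l ^ 2 * μ[fun ω => (X i ω) ^ 2] / 2 * ((1 + l * c) / (1 - l * c))) := by
      intro i
      have hm' : Measurable (fun ω => -X i ω) := (hmeas i).neg
      have hint' : ∀ k : ℕ, Integrable (fun ω => |(-X i ω)| ^ k) μ := fun k =>
        (hint i k).congr (.of_forall fun ω => by simp [abs_neg])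
      have hmean' : μ[fun ω => -X i ω] = 0 := by
        rw [integral_neg, hmean i, neg_zero]
      have hsq : μ[fun ω => (-X i ω) ^ 2] = μ[fun ω => (X i ω) ^ 2] := by
        apply integral_congr_ae; filter_upwards with ω; rw [neg_sq]
      have hcr' : ∀ k : ℕ, 3 ≤ k → μ[fun ω => |(-X i ω)| ^ k] ≤
          c ^ (k - 2) * (k.factorial : ℝ) * μ[fun ω => (-X i ω) ^ 2] := by
        intro k hk
        rw [hsq]
        refine le_trans (le_of_eq ?_) (hcramer i k hk)
        apply integral_congr_ae; filter_upwards with ω; rw [abs_neg]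
      have := bern_mgf μ (fun ω => -X i ω) hm' hint' hmean' c l hc hl hlc hcr'
      rw [hsq] at this
      constructor
      · exact this.1.congr (.of_forall fun ω => by simp [mul_neg, neg_mul])
      · refine le_trans (le_of_eq ?_) this.2
        apply integral_congr_ae; filter_upwards with ω; simp [mul_neg, neg_mul]
    obtain ⟨K, hKdef⟩ : ∃ K : ℝ, K = (1 + l * c) / (1 - l * c) := ⟨_, rfl⟩
    have hlcnn : 0 ≤ l * c := le_of_lt (mul_pos hl hc)
    -- mgf bounds for the sum
    have h2 : ∏ i, Real.exp (l ^ 2 * μ[fun ω => (X i ω) ^ 2] / 2 * K)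
        = Real.exp (∑ i, l ^ 2 * μ[fun ω => (X i ω) ^ 2] / 2 * K) := (Real.exp_sum _ _).symm
    have h3 : (∑ i, l ^ 2 * μ[fun ω => (X i ω) ^ 2] / 2 * K) = l ^ 2 * σ / 2 * K := by
      rw [hσdef, Finset.mul_sum, Finset.sum_div, Finset.sum_mul]
    have hmgf_p : mgf (∑ i, X i) μ l ≤ Real.exp (l ^ 2 * σ / 2 * K) := by
      rw [hindep.mgf_sum hmeas]
      have h1 : ∏ i, mgf (X i) μ l ≤ ∏ i, Real.exp (l ^ 2 * μ[fun ω => (X i ω) ^ 2] / 2 * K) :=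
        Finset.prod_le_prod (fun i _ => mgf_nonneg) (fun i _ => hKdef ▸ (hbern_p i).2)
      rw [← h3]
      exact h1.trans h2.le
    have hmgf_m : mgf (∑ i, X i) μ (-l) ≤ Real.exp (l ^ 2 * σ / 2 * K) := by
      rw [hindep.mgf_sum hmeas]
      have h1 : ∏ i, mgf (X i) μ (-l) ≤ ∏ i, Real.exp (l ^ 2 * μ[fun ω => (X i ω) ^ 2] / 2 * K) :=
        Finset.prod_le_prod (fun i _ => mgf_nonneg) (fun i _ => hKdef ▸ (hbern_m i).2)
      rw [← h3]
      exact h1.trans h2.le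
    -- integrability for the sum
    have hint_sum_p : Integrable (fun ω => Real.exp (l * (∑ i, X i) ω)) μ :=
      hindep.integrable_exp_mul_sum hmeas (fun i _ => (hbern_p i).1)
    have hint_sum_m : Integrable (fun ω => Real.exp (-l * (∑ i, X i) ω)) μ :=
      hindep.integrable_exp_mul_sum hmeas (fun i _ => (hbern_m i).1)
    -- Chernoff bounds
    have hup := measure_ge_le_exp_mul_mgf (X := ∑ i, X i) (μ := μ) t hl.le hint_sum_p
    have hdown := measure_le_le_exp_mul_mgf (X := ∑ i, X i) (μ := μ) (-t)
      (neg_nonpos.mpr hl.le) hint_sum_m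
    have hup' : (μ {ω | t ≤ (∑ i, X i) ω}).toReal ≤
        Real.exp (-(l * t) + l ^ 2 * σ / 2 * K) := by
      refine hup.trans ?_
      rw [Real.exp_add]
      have : Real.exp (-l * t) = Real.exp (-(l * t)) := by ring_nf
      rw [this]
      exact mul_le_mul_of_nonneg_left hmgf_p (Real.exp_pos _).le
    have hdown' : (μ {ω | (∑ i, X i) ω ≤ -t}).toReal ≤
        Real.exp (-(l * t) + l ^ 2 * σ / 2 * K) := by
      refine hdown.trans ?_
      rw [Real.exp_add]
      have : Real.exp (-(-l) * -t) = Real.exp (-(l * t)) := by ring_nf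
      rw [this]
      exact mul_le_mul_of_nonneg_left hmgf_m (Real.exp_pos _).le
    -- exponent computation
    have hden : 4 * σ + 2 * c * t = 2 * D := by rw [hDdef]; ring
    have hexp_ineq : -(l * t) + l ^ 2 * σ / 2 * K ≤ -(t ^ 2) / (4 * σ + 2 * c * t) := by
      rw [hden]
      have e1 : 1 - l * c = 2 * σ / D := by
        rw [hldef, hDdef]; field_simp; ring
      have hKval : K = (1 + l * c) * D / (2 * σ) := by
        rw [hKdef, e1, div_div_eq_mul_div]
      rw [le_div_iff₀ (by positivity), hKval, hldef, hDdef]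
      have hne : (2 * σ + c * t) ≠ 0 := by positivity
      field_simp
      ring_nf
      have p1 : (0:ℝ) < t ^ 2 * σ ^ 4 := by positivity
      have p2 : (0:ℝ) < t ^ 3 * σ ^ 3 * c := by positivity
      have p3 : (0:ℝ) < t ^ 4 * σ ^ 2 * c ^ 2 := by positivity
      nlinarith [p1, p2, p3]
    have hEexp := Real.exp_le_exp.mpr hexp_ineq
    have hEp : μ {ω | t ≤ (∑ i, X i) ω} ≤
        ENNReal.ofReal (Real.exp (-(t ^ 2) / (4 * σ + 2 * c * t))) := by
      rw [← ENNReal.ofReal_toReal (measure_ne_top μ _)]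
      exact ENNReal.ofReal_le_ofReal (hup'.trans hEexp)
    have hEm : μ {ω | (∑ i, X i) ω ≤ -t} ≤
        ENNReal.ofReal (Real.exp (-(t ^ 2) / (4 * σ + 2 * c * t))) := by
      rw [← ENNReal.ofReal_toReal (measure_ne_top μ _)]
      exact ENNReal.ofReal_le_ofReal (hdown'.trans hEexp)
    have hsub : {ω | t ≤ |∑ i, X i ω|} ⊆
        {ω | t ≤ (∑ i, X i) ω} ∪ {ω | (∑ i, X i) ω ≤ -t} := by
      intro ω hω
      simp only [Set.mem_setOf_eq, Set.mem_union, Finset.sum_apply] at *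
      rcases le_abs.mp hω with h | h
      · exact Or.inl h
      · exact Or.inr (by linarith)
    have hstep1 : μ {ω | t ≤ |∑ i, X i ω|} ≤
        μ {ω | t ≤ (∑ i, X i) ω} + μ {ω | (∑ i, X i) ω ≤ -t} :=
      (measure_mono hsub).trans (measure_union_le _ _)
    have hstep2 := hstep1.trans (add_le_add hEp hEm)
    refine hstep2.trans (le_of_eq ?_)
    rw [← ENNReal.ofReal_add (Real.exp_pos _).le (Real.exp_pos _).le]
    congr 1
    ring
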